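/- Let f : ℝ → ℝ^N be N-1 times continuously differentiable at β ∈ ℝ. Then det(f(β), f'(β), …, f^{(N-1)}(β)) = lim_{β₁,…,β_N → β} [∏_{k=1}^{N-1} k! / ∏_{1≤i<j≤N} (β_j - β_i)] · det(f(β₁), f(β₂), …, f(β_N)), where the limit is taken over N-tuples of pairwise distinct points converging to β. -/

import Mathlib

open Filter Finset Polynomial Set

noncomputable def DDF (g : ℝ → ℝ) (t : Finset ℝ) : ℝ :=
  ∑ x ∈ t, g x * (∏ y ∈ t.erase x, (x - y))⁻¹

lemma contDiff_polyeval (n : ℕ∞) (p : ℝ[X]) : ContDiff ℝ n (fun x : ℝ => p.eval x) := by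
  have : (fun x : ℝ => p.eval x)
      = fun x => ∑ i ∈ Finset.range (p.natDegree + 1), p.coeff i * x ^ i := by
    funext x; exact eval_eq_sum_range x
  rw [this]
  exact ContDiff.sum fun i _ => contDiff_const.mul (contDiff_id.pow i)

lemma iteratedDeriv_polyeval (n : ℕ) (p : ℝ[X]) :
    iteratedDeriv n (fun x : ℝ => p.eval x) = fun x => (derivative^[n] p).eval x := by
  induction n generalizing p with
  | zero => simp
  | succ n ih =>
    rw [iteratedDeriv_succ']
    have h1 : deriv (fun x : ℝ => p.eval x) = fun x => p.derivative.eval x := by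
      funext x; exact Polynomial.deriv (p := p)
    rw [h1, ih p.derivative, Function.iterate_succ_apply]

lemma iter_rolle : ∀ (k : ℕ) (h : ℝ → ℝ) (U : Set ℝ), IsOpen U → U.OrdConnected →
    ContDiffOn ℝ k h U → ∀ (x : Fin (k+1) → ℝ), StrictMono x → (∀ i, x i ∈ U) →
    (∀ i, h (x i) = 0) → ∃ ξ ∈ Set.Icc (x 0) (x (Fin.last k)), iteratedDeriv k h ξ = 0 := by
  intro k
  induction k with
  | zero =>
    intro h U _ _ _ x _ _ hz
    exact ⟨x 0, ⟨le_rfl, le_rfl⟩, by simpa using hz 0⟩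
  | succ k ih =>
    intro h U hU hUo hh x hx hmem hz
    have key : ∀ i : Fin (k+1), ∃ c ∈ Set.Ioo (x i.castSucc) (x i.succ), deriv h c = 0 := by
      intro i
      exact exists_deriv_eq_zero (hx (show i.castSucc < i.succ from Fin.castSucc_lt_succ))
        (hh.continuousOn.mono (hUo.out (hmem _) (hmem _)))
        (by rw [hz, hz])
    choose ξ hξ hξ0 using key
    have hξmono : StrictMono ξ := by
      refine Fin.strictMono_iff_lt_succ.2 fun i => ?_
      have h1 : ξ i.castSucc < x i.castSucc.succ := (hξ i.castSucc).2
      have h2 : x i.succ.castSucc < ξ i.succ := (hξ i.succ).1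
      rw [Fin.succ_castSucc] at h1
      exact h1.trans h2
    have hξmem : ∀ i, ξ i ∈ U := fun i =>
      hUo.out (hmem i.castSucc) (hmem i.succ) ⟨(hξ i).1.le, (hξ i).2.le⟩
    have hd : ContDiffOn ℝ k (deriv h) U := hh.deriv_of_isOpen hU (by norm_cast)
    obtain ⟨ζ, hζI, hζ⟩ := ih (deriv h) U hU hUo hd ξ hξmono hξmem hξ0
    refine ⟨ζ, ⟨?_, ?_⟩, by rw [iteratedDeriv_succ']; exact hζ⟩
    · have h0 : x 0 < ξ 0 := by simpa using (hξ 0).1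
      exact le_trans h0.le hζI.1
    · have hl : ξ (Fin.last k) < x (Fin.last (k+1)) := by simpa using (hξ (Fin.last k)).2
      exact le_trans hζI.2 hl.le

lemma iteratedDerivWithin_of_isOpen' {g : ℝ → ℝ} {U : Set ℝ} (hU : IsOpen U) (k : ℕ)
    {x : ℝ} (hx : x ∈ U) : iteratedDerivWithin k g U x = iteratedDeriv k g x := by
  rw [iteratedDerivWithin_eq_iteratedFDerivWithin, iteratedDeriv_eq_iteratedFDeriv,
    iteratedFDerivWithin_of_isOpen k hU hx]

lemma coeff_interpolate (t : Finset ℝ) (k : ℕ) (ht : t.card = k + 1) (g : ℝ → ℝ) :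
    (Lagrange.interpolate t id g).coeff k = DDF g t := by
  rw [Lagrange.interpolate_apply, finset_sum_coeff, DDF]
  refine Finset.sum_congr rfl fun x hx => ?_
  rw [coeff_C_mul]
  congr 1
  have hcard : (t.erase x).card = k := by rw [Finset.card_erase_of_mem hx, ht]; rfl
  have hq : ∀ y ∈ t.erase x, Lagrange.basisDivisor (id x) (id y) = C (x - y)⁻¹ * (X - C y) :=
    fun _ _ => rfl
  rw [Lagrange.basis, Finset.prod_congr rfl hq, Finset.prod_mul_distrib, ← map_prod, coeff_C_mul]
  have hmon : (∏ y ∈ t.erase x, (X - C y) : ℝ[X]).Monic :=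
    monic_prod_of_monic _ _ fun y _ => monic_X_sub_C y
  have hdeg : (∏ y ∈ t.erase x, (X - C y) : ℝ[X]).natDegree = k := by
    rw [natDegree_prod_of_monic _ _ fun y _ => monic_X_sub_C y]
    simp [hcard]
  rw [show k = (∏ y ∈ t.erase x, (X - C y) : ℝ[X]).natDegree from hdeg.symm,
    hmon.coeff_natDegree, mul_one, Finset.prod_inv_distrib]

lemma ddf_mvt (k : ℕ) (t : Finset ℝ) (ht : t.card = k + 1) (U : Set ℝ) (hU : IsOpen U)
    (hUo : U.OrdConnected) (hsub : ↑t ⊆ U) (g : ℝ → ℝ) (hg : ContDiffOn ℝ k g U) :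
    ∃ ξ ∈ U, iteratedDeriv k g ξ = k.factorial * DDF g t := by
  classical
  set p := Lagrange.interpolate t id g with hp
  -- the interpolating polynomial has small degree
  have hdegp : p.natDegree ≤ k := by
    by_cases hp0 : p = 0
    · simp [hp0]
    · have := Lagrange.degree_interpolate_lt (s := t) (r := g) (Set.injOn_id _)
      rw [ht] at this
      have := (natDegree_lt_iff_degree_lt hp0).2 (by exact_mod_cast this)
      omega
  set φ : ℝ → ℝ := fun x => g x - p.eval x with hφ
  have hpsm : ∀ (m : ℕ∞), ContDiff ℝ m (fun x : ℝ => p.eval x) := fun m => contDiff_polyeval m p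
  have hφC : ContDiffOn ℝ k φ U := hg.sub ((hpsm k).contDiffOn)
  -- sorted nodes
  have hmono : StrictMono (fun i : Fin (k+1) => ((t.orderIsoOfFin ht i : ℝ))) := by
    intro i j hij
    exact_mod_cast (t.orderIsoOfFin ht).strictMono hij
  have hmem : ∀ i : Fin (k+1), ((t.orderIsoOfFin ht i : ℝ)) ∈ U :=
    fun i => hsub (t.orderIsoOfFin ht i).2
  have hzero : ∀ i : Fin (k+1), φ ((t.orderIsoOfFin ht i : ℝ)) = 0 := by
    intro i
    have hmem' : ((t.orderIsoOfFin ht i : ℝ)) ∈ t := (t.orderIsoOfFin ht i).2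
    have := Lagrange.eval_interpolate_at_node (s := t) (r := g) (Set.injOn_id _) hmem'
    simp only [hφ, id_eq] at this ⊢
    rw [← hp] at this
    rw [this]
    ring
  obtain ⟨ξ, hξI, hξ⟩ := iter_rolle k φ U hU hUo hφC _ hmono hmem hzero
  have hξU : ξ ∈ U := hUo.out (hmem 0) (hmem (Fin.last k)) hξI
  refine ⟨ξ, hξU, ?_⟩
  -- split the iterated derivative
  have hsplit : iteratedDeriv k φ ξ = iteratedDeriv k g ξ - iteratedDeriv k (fun x => p.eval x) ξ := by
    have h1 : iteratedDerivWithin k (g - fun x => p.eval x) U ξ =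
        iteratedDerivWithin k g U ξ - iteratedDerivWithin k (fun x => p.eval x) U ξ :=
      iteratedDerivWithin_sub hξU hU.uniqueDiffOn (hg ξ hξU) ((hpsm k).contDiffOn ξ hξU)
    have e0 : φ = g - fun x => p.eval x := rfl
    rw [e0, ← iteratedDerivWithin_of_isOpen' hU k hξU, h1,
      iteratedDerivWithin_of_isOpen' hU k hξU, iteratedDerivWithin_of_isOpen' hU k hξU]
  -- the polynomial part
  have hpoly : iteratedDeriv k (fun x => p.eval x) ξ = k.factorial * DDF g t := by
    rw [iteratedDeriv_polyeval]
    have hC : derivative^[k] p = C ((derivative^[k] p).coeff 0) :=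
      eq_C_of_natDegree_le_zero (le_trans (natDegree_iterate_derivative p k) (by omega))
    rw [hC]
    rw [coeff_iterate_derivative]
    simp only [zero_add, Nat.descFactorial_self, eval_C, smul_eq_mul, nsmul_eq_mul]
    rw [coeff_interpolate t k ht g]
  rw [hξ] at hsplit
  rw [← hpoly]
  linarith [hsplit]

lemma ddf_tendsto {ι : Type*} [Fintype ι] (s : Finset ι) (k : ℕ) (hs : s.card = k + 1)
    (g : ℝ → ℝ) (β : ℝ) (r : ℝ) (hr : 0 < r) (hg : ContDiffOn ℝ k g (Metric.ball β r)) :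
    Tendsto (fun b : ι → ℝ => DDF g (s.image b))
      (nhdsWithin (fun _ => β) {b : ι → ℝ | Function.Injective b})
      (nhds (iteratedDeriv k g β / k.factorial)) := by
  classical
  rw [Metric.tendsto_nhds]
  intro ε hε
  have hkpos : (0 : ℝ) < k.factorial := by exact_mod_cast k.factorial_pos
  -- continuity of the k-th derivative within the ball
  have hcont : ContinuousOn (iteratedDerivWithin k g (Metric.ball β r)) (Metric.ball β r) :=
    hg.continuousOn_iteratedDerivWithin (by exact_mod_cast le_rfl)
      (Metric.isOpen_ball.uniqueDiffOn)
  have hca : ContinuousAt (iteratedDerivWithin k g (Metric.ball β r)) β :=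
    hcont.continuousAt (Metric.ball_mem_nhds β hr)
  rw [Metric.continuousAt_iff] at hca
  obtain ⟨δ, hδ, hδc⟩ := hca (ε * k.factorial) (by positivity)
  set δ' := min δ r with hδ'
  have hδ'pos : 0 < δ' := lt_min hδ hr
  have hball : Metric.ball β δ' ⊆ Metric.ball β r := Metric.ball_subset_ball (min_le_right _ _)
  filter_upwards [mem_nhdsWithin_of_mem_nhds (Metric.ball_mem_nhds (fun _ => β) hδ'pos),
    self_mem_nhdsWithin] with b hbball hbinj
  have hbij : Function.Injective b := hbinj
  set t := s.image b with htdef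
  have htcard : t.card = k + 1 := by
    rw [htdef, Finset.card_image_of_injective s hbij, hs]
  have htsub : ↑t ⊆ Metric.ball β δ' := by
    intro y hy
    simp only [htdef, Finset.coe_image, Set.mem_image, Finset.mem_coe] at hy
    obtain ⟨i, _, rfl⟩ := hy
    have h1 : dist (b i) β ≤ dist b (fun _ => β) := dist_le_pi_dist b (fun _ => β) i
    have h2 : dist b (fun _ => β) < δ' := by simpa [Metric.mem_ball] using hbball
    exact Metric.mem_ball.2 (lt_of_le_of_lt h1 h2)
  obtain ⟨ξ, hξU, hξeq⟩ := ddf_mvt k t htcard (Metric.ball β δ') Metric.isOpen_ball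
    ((convex_ball β δ').ordConnected) htsub g (hg.mono hball)
  have hξr : ξ ∈ Metric.ball β r := hball hξU
  have hβr : β ∈ Metric.ball β r := Metric.mem_ball_self hr
  have e1 : iteratedDeriv k g ξ = iteratedDerivWithin k g (Metric.ball β r) ξ :=
    (iteratedDerivWithin_of_isOpen' Metric.isOpen_ball k hξr).symm
  have e2 : iteratedDeriv k g β = iteratedDerivWithin k g (Metric.ball β r) β :=
    (iteratedDerivWithin_of_isOpen' Metric.isOpen_ball k hβr).symm
  have hDDF : DDF g t = iteratedDeriv k g ξ / k.factorial := by
    rw [hξeq, mul_div_cancel_left₀ _ hkpos.ne']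
  rw [hDDF]
  have hd : dist ξ β < δ := lt_of_lt_of_le (Metric.mem_ball.1 hξU) (min_le_left _ _)
  have := hδc hd
  rw [← e1, ← e2] at this
  rw [Real.dist_eq, div_sub_div_same, abs_div, abs_of_pos hkpos, div_lt_iff₀ hkpos]
  rw [Real.dist_eq] at this
  linarith [this]

theorem confluent_vandermonde_limit (N : ℕ) (f : ℝ → Fin N → ℝ) (β : ℝ)
    (hf : ContDiffAt ℝ (N - 1) f β) :
    Tendsto (fun b : Fin N → ℝ =>
        ((∏ k ∈ Finset.range N, (Nat.factorial k : ℝ)) /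
            ∏ i : Fin N, ∏ j ∈ Finset.Ioi i, (b j - b i)) *
          Matrix.det (Matrix.of fun i j : Fin N => f (b i) j))
      (nhdsWithin (fun _ => β) {b : Fin N → ℝ | Function.Injective b})
      (nhds (Matrix.det (Matrix.of fun i j : Fin N =>
          iteratedDeriv (i : ℕ) (fun x => f x j) β))) := by
  classical
  have hcast : ((N : WithTop ℕ∞) - 1) = ((N - 1 : ℕ) : WithTop ℕ∞) := by
    norm_cast
  rw [hcast] at hf
  obtain ⟨u, hu, hfu⟩ := hf.contDiffOn le_rfl (by simp)
  obtain ⟨r, hr, hball⟩ := Metric.mem_nhds_iff.1 hu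
  have hcoord : ∀ j : Fin N, ContDiffOn ℝ (N-1) (fun x => f x j) (Metric.ball β r) :=
    fun j => (contDiffOn_pi.1 (hfu.mono hball)) j
  set P : ℝ := ∏ k ∈ Finset.range N, (Nat.factorial k : ℝ) with hP
  set Dmat : (Fin N → ℝ) → Matrix (Fin N) (Fin N) ℝ :=
    fun b => Matrix.of fun k j => DDF (fun x => f x j) ((Finset.Iic k).image b) with hDdef
  -- Algebraic identity, valid for injective b
  have halg : ∀ b : Fin N → ℝ, Function.Injective b →
      (P / ∏ i : Fin N, ∏ j ∈ Finset.Ioi i, (b j - b i)) *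
        Matrix.det (Matrix.of fun i j : Fin N => f (b i) j) = P * (Dmat b).det := by
    intro b hb
    set V : ℝ := ∏ i : Fin N, ∏ j ∈ Finset.Ioi i, (b j - b i) with hV
    set F : Matrix (Fin N) (Fin N) ℝ := Matrix.of fun i j : Fin N => f (b i) j with hF
    set L : Matrix (Fin N) (Fin N) ℝ := Matrix.of fun k i =>
      if i ≤ k then (∏ l ∈ (Finset.Iic k).erase i, (b i - b l))⁻¹ else 0 with hL
    have hLF : Dmat b = L * F := by
      ext k j
      rw [Matrix.mul_apply]
      have hfil : Finset.univ.filter (fun i : Fin N => i ≤ k) = Finset.Iic k := by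
        ext i; simp
      have hrhs : ∑ i : Fin N, L k i * F i j
          = ∑ i ∈ Finset.Iic k, (∏ l ∈ (Finset.Iic k).erase i, (b i - b l))⁻¹ * f (b i) j := by
        calc ∑ i : Fin N, L k i * F i j
            = ∑ i : Fin N, (if i ≤ k then (∏ l ∈ (Finset.Iic k).erase i, (b i - b l))⁻¹
                * f (b i) j else 0) := by
              refine Finset.sum_congr rfl fun i _ => ?_
              by_cases hik : i ≤ k <;> simp [hL, hF, hik]
          _ = ∑ i ∈ Finset.univ.filter (fun i : Fin N => i ≤ k),
                (∏ l ∈ (Finset.Iic k).erase i, (b i - b l))⁻¹ * f (b i) j :=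
              (Finset.sum_filter _ _).symm
          _ = ∑ i ∈ Finset.Iic k, (∏ l ∈ (Finset.Iic k).erase i, (b i - b l))⁻¹ * f (b i) j := by
              rw [hfil]
      rw [hrhs]
      -- now the DDF side
      have hinj : ∀ x ∈ Finset.Iic k, ∀ y ∈ Finset.Iic k, b x = b y → x = y :=
        fun x _ y _ hxy => hb hxy
      simp only [hDdef, Matrix.of_apply, DDF]
      rw [Finset.sum_image hinj]
      refine Finset.sum_congr rfl fun i hi => ?_
      rw [← Finset.image_erase hb, Finset.prod_image
        (fun x hx y hy hxy => hb hxy), mul_comm]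
    have htri : L.BlockTriangular OrderDual.toDual := by
      intro i j hij
      have : i < j := hij
      simp [hL, Matrix.of_apply, not_le.2 this, this.not_ge]
    have hdetL : L.det = V⁻¹ := by
      rw [Matrix.det_of_lowerTriangular L htri]
      have hdiag : ∀ k : Fin N, L k k = (∏ l ∈ Finset.Iio k, (b k - b l))⁻¹ := by
        intro k; simp [hL, Matrix.of_apply, Finset.Iic_erase]
      rw [Finset.prod_congr rfl fun k _ => hdiag k, Finset.prod_inv_distrib]
      congr 1
      rw [hV]
      refine Finset.prod_comm' ?_
      intro x y
      simp [Finset.mem_Ioi, Finset.mem_Iio, and_comm]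
    have hdetD : (Dmat b).det = V⁻¹ * F.det := by
      rw [hLF, Matrix.det_mul, hdetL]
    show (P / V) * F.det = P * (Dmat b).det
    rw [hdetD, div_eq_mul_inv]
    ring
  -- the limit matrix
  set M' : Matrix (Fin N) (Fin N) ℝ := Matrix.of fun k j : Fin N =>
    iteratedDeriv (k : ℕ) (fun x => f x j) β / ((k : ℕ).factorial : ℝ) with hM'
  have hdetM : Matrix.det (Matrix.of fun i j : Fin N =>
      iteratedDeriv (i : ℕ) (fun x => f x j) β) = P * M'.det := by
    have he : (Matrix.of fun i j : Fin N => iteratedDeriv (i : ℕ) (fun x => f x j) β)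
        = Matrix.of fun i j : Fin N => (((i : ℕ).factorial : ℝ)) * M' i j := by
      ext i j
      have : (((i : ℕ).factorial : ℝ)) ≠ 0 := by exact_mod_cast (i : ℕ).factorial_ne_zero
      simp [hM', Matrix.of_apply]
      field_simp
    rw [he, Matrix.det_mul_column]
    congr 1
    rw [hP, ← Fin.prod_univ_eq_prod_range (fun k => (Nat.factorial k : ℝ)) N]
  -- convergence of the divided-difference matrix
  have hDt : Tendsto Dmat (nhdsWithin (fun _ => β) {b : Fin N → ℝ | Function.Injective b})
      (nhds M') := by
    refine tendsto_pi_nhds.2 ?_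
    intro k
    rw [tendsto_pi_nhds]
    intro j
    have hcard : (Finset.Iic k).card = (k : ℕ) + 1 := by simp
    have hk : (((k : ℕ) : ℕ∞) : WithTop ℕ∞) ≤ (((N - 1 : ℕ) : ℕ∞) : WithTop ℕ∞) := by
      have h1 : (k : ℕ) ≤ N - 1 := by omega
      exact_mod_cast h1
    exact ddf_tendsto (Finset.Iic k) (k : ℕ) hcard (fun x => f x j) β r hr
      ((hcoord j).of_le hk)
  have hdet : Tendsto (fun b => P * (Dmat b).det)
      (nhdsWithin (fun _ => β) {b : Fin N → ℝ | Function.Injective b})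
      (nhds (P * M'.det)) :=
    (((Continuous.matrix_det continuous_id).tendsto M').comp hDt).const_mul P
  rw [hdetM]
  refine Tendsto.congr' ?_ hdet
  filter_upwards [self_mem_nhdsWithin] with b hb
  exact (halg b hb).symm
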